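/- Let λ = (λ_1 ≥ λ_2 ≥ … ≥ 0) and μ = (μ_1 ≥ μ_2 ≥ … ≥ 0) be partitions (of possibly different integers n and m). Then for every i ∈ ℤ, (f_λ(i) − f_μ(i))² ≤ 8·max_{j ≥ 1} |Σ_{k=1}^{j} (λ_k − μ_k)|. -/

import Mathlib

noncomputable section

/-- The profile of a partition `l` (0-based indexing: `l k` is the row λ_{k+1}):
`f_λ(i) = i + 2·|{k ≥ 1 : λ_k − k ≥ i}|`. -/
def profile (l : ℕ → ℕ) (i : ℤ) : ℤ :=
  i + 2 * (Set.ncard {k : ℕ | i ≤ (l k : ℤ) - ((k : ℤ) + 1)} : ℤ)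

lemma set_eq_Iio (l : ℕ → ℕ) (hl : ∀ k, l (k + 1) ≤ l k) (hl0 : ∃ N, ∀ k ≥ N, l k = 0)
    (i : ℤ) :
    {k : ℕ | i ≤ (l k : ℤ) - ((k : ℤ) + 1)} =
      Set.Iio ({k : ℕ | i ≤ (l k : ℤ) - ((k : ℤ) + 1)}.ncard) := by
  set A := {k : ℕ | i ≤ (l k : ℤ) - ((k : ℤ) + 1)} with hA
  have hant : Antitone l := antitone_nat_of_succ_le hl
  have hdown : ∀ j k : ℕ, j ≤ k → k ∈ A → j ∈ A := by
    intro j k hjk hk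
    have h1 : (l k : ℤ) ≤ l j := by exact_mod_cast hant hjk
    simp only [hA, Set.mem_setOf_eq] at hk ⊢
    have h2 : (j : ℤ) ≤ k := by exact_mod_cast hjk
    linarith
  obtain ⟨N, hN⟩ := hl0
  have hfin : A.Finite := by
    apply Set.Finite.subset (Set.finite_Iio (N + i.natAbs + 1))
    intro k hk
    simp only [hA, Set.mem_setOf_eq] at hk
    simp only [Set.mem_Iio]
    by_contra hcon
    push_neg at hcon
    have h0 : l k = 0 := hN k (by omega)
    have h1 : (i.natAbs : ℤ) ≤ (k : ℤ) := by exact_mod_cast (by omega : i.natAbs ≤ k)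
    have h2 : -i ≤ (i.natAbs : ℤ) := by
      rw [← Int.abs_eq_natAbs]; exact neg_le_abs i
    rw [h0] at hk
    push_cast at hk
    linarith
  set n := A.ncard with hn
  ext k
  simp only [Set.mem_Iio]
  constructor
  · intro hk
    have hsub : Set.Iic k ⊆ A := fun j hj => hdown j k hj hk
    have hcard : (Set.Iic k).ncard ≤ n := Set.ncard_le_ncard hsub hfin
    have : (Set.Iic k).ncard = k + 1 := by
      rw [show Set.Iic k = ↑(Finset.Iic k) by ext j; simp,
        Set.ncard_coe_finset, Nat.card_Iic]
    omega
  · intro hk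
    by_contra hcon
    have hsub : A ⊆ Set.Iio k := by
      intro j hj
      simp only [Set.mem_Iio]
      by_contra hjk
      push_neg at hjk
      exact hcon (hdown k j hjk hj)
    have hcard : n ≤ (Set.Iio k).ncard := Set.ncard_le_ncard hsub (Set.finite_Iio k)
    have : (Set.Iio k).ncard = k := by
      rw [show Set.Iio k = ↑(Finset.Iio k) by ext j; simp,
        Set.ncard_coe_finset, Nat.card_Iio]
    omega

lemma core (l m : ℕ → ℕ) (i : ℤ) (a b : ℕ) (hba : b ≤ a)
    (hla : ∀ k, k < a → (i + a : ℤ) ≤ l k)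
    (hmb : ∀ k, b ≤ k → (m k : ℤ) ≤ i + b)
    (h0 : ∃ N, 1 ≤ N ∧ ∀ k ≥ N, l k = 0 ∧ m k = 0) :
    ((a : ℤ) - b) ^ 2 ≤ 2 * sSup {t : ℤ | ∃ j : ℕ, 1 ≤ j ∧
      t = |∑ k ∈ Finset.range j, ((l k : ℤ) - (m k : ℤ))|} := by
  obtain ⟨N, hN1, hN⟩ := h0
  set S : ℕ → ℤ := fun j => ∑ k ∈ Finset.range j, ((l k : ℤ) - (m k : ℤ)) with hS
  set T := {t : ℤ | ∃ j : ℕ, 1 ≤ j ∧ t = |S j|} with hT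
  have hconst : ∀ j, N ≤ j → S j = S N := by
    intro j hj
    have h1 : S j = S N + ∑ k ∈ Finset.Ico N j, ((l k : ℤ) - (m k : ℤ)) := by
      simp only [hS]
      rw [Finset.range_eq_Ico, Finset.range_eq_Ico]
      exact (Finset.sum_Ico_consecutive _ (Nat.zero_le N) hj).symm
    rw [h1, Finset.sum_eq_zero, add_zero]
    intro k hk
    obtain ⟨h1, h2⟩ := hN k (Finset.mem_Ico.mp hk).1
    simp [h1, h2]
  have hTsub : T ⊆ (fun j => |S j|) '' (Set.Icc 1 N) := by
    rintro t ⟨j, hj1, rfl⟩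
    rcases le_total j N with h | h
    · exact ⟨j, ⟨hj1, h⟩, rfl⟩
    · exact ⟨N, ⟨hN1, le_refl N⟩, by rw [hconst j h]⟩
  have hTbdd : BddAbove T :=
    (((Set.finite_Icc 1 N).image _).subset hTsub).bddAbove
  have hmem : ∀ j, 1 ≤ j → |S j| ≤ sSup T := fun j hj => le_csSup hTbdd ⟨j, hj, rfl⟩
  have hsup0 : 0 ≤ sSup T := le_trans (abs_nonneg _) (hmem 1 le_rfl)
  rcases Nat.eq_or_lt_of_le hba with heq | hlt
  · rw [heq]
    simp only [sub_self]
    nlinarith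
  · have ha1 : 1 ≤ a := by omega
    have hdiff : S a - S b = ∑ k ∈ Finset.Ico b a, ((l k : ℤ) - (m k : ℤ)) := by
      simp only [hS]
      rw [Finset.range_eq_Ico, Finset.range_eq_Ico,
        ← Finset.sum_Ico_consecutive _ (Nat.zero_le b) (le_of_lt hlt)]
      ring
    have hterm : ∀ k ∈ Finset.Ico b a, ((a : ℤ) - b) ≤ (l k : ℤ) - m k := by
      intro k hk
      obtain ⟨hk1, hk2⟩ := Finset.mem_Ico.mp hk
      have h1 := hla k hk2
      have h2 := hmb k hk1
      linarith
    have hsum : ((a : ℤ) - b) ^ 2 ≤ S a - S b := by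
      have h1 := Finset.card_nsmul_le_sum (Finset.Ico b a) _ _ hterm
      rw [Nat.card_Ico, nsmul_eq_mul] at h1
      rw [hdiff]
      have hcast : ((a - b : ℕ) : ℤ) = (a : ℤ) - b := by omega
      calc ((a : ℤ) - b) ^ 2 = ((a - b : ℕ) : ℤ) * ((a : ℤ) - b) := by rw [hcast]; ring
        _ ≤ _ := h1
    have hSb : |S b| ≤ sSup T := by
      rcases Nat.eq_zero_or_pos b with hb0 | hb1
      · have : S b = 0 := by simp [hS, hb0]
        rw [this]; simpa using hsup0
      · exact hmem b hb1
    have hSa := hmem a ha1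
    have h1 : S a ≤ |S a| := le_abs_self _
    have h2 : -S b ≤ |S b| := neg_le_abs _
    linarith

theorem stmt_6 (l m : ℕ → ℕ)
    (hl : ∀ k, l (k + 1) ≤ l k) (hl0 : ∃ N, ∀ k ≥ N, l k = 0)
    (hm : ∀ k, m (k + 1) ≤ m k) (hm0 : ∃ N, ∀ k ≥ N, m k = 0) :
    ∀ i : ℤ, (profile l i - profile m i) ^ 2 ≤
      8 * sSup {t : ℤ | ∃ j : ℕ, 1 ≤ j ∧
        t = |∑ k ∈ Finset.range j, ((l k : ℤ) - (m k : ℤ))|} := by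
  intro i
  have hAl := set_eq_Iio l hl hl0 i
  have hAm := set_eq_Iio m hm hm0 i
  set a := {k : ℕ | i ≤ (l k : ℤ) - ((k : ℤ) + 1)}.ncard with ha
  set b := {k : ℕ | i ≤ (m k : ℤ) - ((k : ℤ) + 1)}.ncard with hb
  have hant_l : Antitone l := antitone_nat_of_succ_le hl
  have hant_m : Antitone m := antitone_nat_of_succ_le hm
  -- key consequences of the initial-segment structure
  have hla : ∀ k, k < a → (i + a : ℤ) ≤ l k := by
    intro k hk
    have ha1 : 1 ≤ a := by omega
    have hmem : a - 1 ∈ {k : ℕ | i ≤ (l k : ℤ) - ((k : ℤ) + 1)} := by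
      rw [hAl]; simp only [Set.mem_Iio]; omega
    simp only [Set.mem_setOf_eq] at hmem
    have h1 : (l (a - 1) : ℤ) ≤ l k := by exact_mod_cast hant_l (by omega : k ≤ a - 1)
    have h2 : ((a - 1 : ℕ) : ℤ) = (a : ℤ) - 1 := by omega
    rw [h2] at hmem
    linarith
  have hlb : ∀ k, k < b → (i + b : ℤ) ≤ m k := by
    intro k hk
    have hb1 : 1 ≤ b := by omega
    have hmem : b - 1 ∈ {k : ℕ | i ≤ (m k : ℤ) - ((k : ℤ) + 1)} := by
      rw [hAm]; simp only [Set.mem_Iio]; omega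
    simp only [Set.mem_setOf_eq] at hmem
    have h1 : (m (b - 1) : ℤ) ≤ m k := by exact_mod_cast hant_m (by omega : k ≤ b - 1)
    have h2 : ((b - 1 : ℕ) : ℤ) = (b : ℤ) - 1 := by omega
    rw [h2] at hmem
    linarith
  have hmb : ∀ k, b ≤ k → (m k : ℤ) ≤ i + b := by
    intro k hk
    have hnot : b ∉ {k : ℕ | i ≤ (m k : ℤ) - ((k : ℤ) + 1)} := by
      rw [hAm]; simp
    simp only [Set.mem_setOf_eq, not_le] at hnot
    have h1 : (m k : ℤ) ≤ m b := by exact_mod_cast hant_m hk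
    linarith
  have hma : ∀ k, a ≤ k → (l k : ℤ) ≤ i + a := by
    intro k hk
    have hnot : a ∉ {k : ℕ | i ≤ (l k : ℤ) - ((k : ℤ) + 1)} := by
      rw [hAl]; simp
    simp only [Set.mem_setOf_eq, not_le] at hnot
    have h1 : (l k : ℤ) ≤ l a := by exact_mod_cast hant_l hk
    linarith
  obtain ⟨Nl, hNl⟩ := hl0
  obtain ⟨Nm, hNm⟩ := hm0
  have h0 : ∃ N, 1 ≤ N ∧ ∀ k ≥ N, l k = 0 ∧ m k = 0 :=
    ⟨Nl + Nm + 1, by omega, fun k hk => ⟨hNl k (by omega), hNm k (by omega)⟩⟩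
  have h0' : ∃ N, 1 ≤ N ∧ ∀ k ≥ N, m k = 0 ∧ l k = 0 :=
    ⟨Nl + Nm + 1, by omega, fun k hk => ⟨hNm k (by omega), hNl k (by omega)⟩⟩
  have hprof : profile l i - profile m i = 2 * ((a : ℤ) - b) := by
    simp only [profile, ← ha, ← hb]; ring
  rw [hprof]
  rcases le_total b a with hba | hab
  · have := core l m i a b hba hla hmb h0
    nlinarith
  · have hkey := core m l i b a hab hlb hma h0'
    have hTeq : {t : ℤ | ∃ j : ℕ, 1 ≤ j ∧
          t = |∑ k ∈ Finset.range j, ((m k : ℤ) - (l k : ℤ))|} =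
        {t : ℤ | ∃ j : ℕ, 1 ≤ j ∧
          t = |∑ k ∈ Finset.range j, ((l k : ℤ) - (m k : ℤ))|} := by
      have habs : ∀ j : ℕ, |∑ k ∈ Finset.range j, ((m k : ℤ) - (l k : ℤ))| =
          |∑ k ∈ Finset.range j, ((l k : ℤ) - (m k : ℤ))| := by
        intro j
        rw [← abs_neg, ← Finset.sum_neg_distrib]
        congr 1
        exact Finset.sum_congr rfl (fun k _ => by ring)
      ext t
      constructor
      · rintro ⟨j, hj, rfl⟩; exact ⟨j, hj, (habs j)⟩
      · rintro ⟨j, hj, rfl⟩; exact ⟨j, hj, (habs j).symm⟩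
    rw [hTeq] at hkey
    nlinarith
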